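/- Let 2 ≤ r < n be integers, let (s₂, …, s_r) be positive integers, and for 1 ≤ k ≤ n−r+1 set c_k = Σ_{k < k₂ < ⋯ < k_r ≤ n} 1/(k₂^{s₂} ⋯ k_r^{s_r}). If p is a prime with n/2 < p ≤ n−r+1, then ν_p(c_k) ≥ −max_{2≤i≤r} s_i for 1 ≤ k < p, and ν_p(c_k) ≥ 0 for p ≤ k ≤ n−r+1; consequently min_{1≤k≤n−r+1, k≠p} ν_p(c_k) ≥ −max_{2≤i≤r} s_i. -/

import Mathlib

/-- `c_k = ∑_{k < k₂ < ⋯ < k_r ≤ n} 1/(k₂^{s₂} ⋯ k_r^{s_r})`, the inner sum of the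
multiple harmonic sum, where the tail `(k₂,…,k_r)` has `r` entries with exponents `s'`. -/
def cval (n r : ℕ) (s' : Fin r → ℕ) (k : ℕ) : ℚ :=
  ∑ kk ∈ Finset.univ.filter (fun kk : Fin r → Fin n =>
      (∀ i j : Fin r, i < j → kk i < kk j) ∧ ∀ i, k ≤ (kk i : ℕ)),
    ∏ i, (1 : ℚ) / ((kk i : ℕ) + 1 : ℚ) ^ s' i

private lemma padicValRat_prod_aux {p : ℕ} [Fact p.Prime] {α : Type*} [DecidableEq α]
    (s : Finset α) (g : α → ℚ) (hg : ∀ a ∈ s, g a ≠ 0) :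
    padicValRat p (∏ a ∈ s, g a) = ∑ a ∈ s, padicValRat p (g a) := by
  induction s using Finset.induction with
  | empty => simp
  | @insert a t ha ih =>
    rw [Finset.prod_insert ha, Finset.sum_insert ha,
      padicValRat.mul (hg a (Finset.mem_insert_self a t))
        (Finset.prod_ne_zero_iff.mpr fun b hb => hg b (Finset.mem_insert_of_mem hb)),
      ih fun b hb => hg b (Finset.mem_insert_of_mem hb)]

private lemma padicValRat_sum_ge {p : ℕ} [Fact p.Prime] {α : Type*} (m : ℤ)
    (s : Finset α) (g : α → ℚ) (hne : s.Nonempty)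
    (hpos : ∀ a ∈ s, 0 < g a) (hv : ∀ a ∈ s, m ≤ padicValRat p (g a)) :
    m ≤ padicValRat p (∑ a ∈ s, g a) := by
  classical
  induction s using Finset.cons_induction with
  | empty => exact absurd hne (by simp)
  | cons a t ha ih =>
    rw [Finset.sum_cons]
    rcases t.eq_empty_or_nonempty with rfl | ht
    · simpa using hv a (by simp)
    · have hsum : 0 < ∑ b ∈ t, g b :=
        Finset.sum_pos (fun b hb => hpos b (Finset.mem_cons_of_mem hb)) ht
      have hga : 0 < g a := hpos a (Finset.mem_cons_self a t)
      have hne0 : g a + ∑ b ∈ t, g b ≠ 0 := by positivity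
      refine le_trans (le_min (hv a (Finset.mem_cons_self a t))
        (ih ht (fun b hb => hpos b (Finset.mem_cons_of_mem hb))
          (fun b hb => hv b (Finset.mem_cons_of_mem hb))))
        (padicValRat.min_le_padicValRat_add hne0)

/-- Let the full length be `r + 1` with `2 ≤ r + 1 < n`. If `p` is a prime with
`n/2 < p ≤ n − (r+1) + 1 = n − r`, then `ν_p(c_k) ≥ −max_i s_i` for `1 ≤ k < p` and
`ν_p(c_k) ≥ 0` for `p ≤ k ≤ n − r`; consequently
`min_{1 ≤ k ≤ n−r, k ≠ p} ν_p(c_k) ≥ −max_i s_i`. -/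
theorem padicValRat_cval_bounds (r n p : ℕ) (hr : 1 ≤ r) (hn : r + 2 ≤ n)
    (s' : Fin r → ℕ) (hs' : ∀ i, 0 < s' i)
    (hp : p.Prime) (hp1 : (n : ℚ) / 2 < (p : ℚ)) (hp2 : p ≤ n - r) :
    (∀ k : ℕ, 1 ≤ k → k < p →
        -((Finset.univ.sup s' : ℕ) : ℤ) ≤ padicValRat p (cval n r s' k)) ∧
    (∀ k : ℕ, p ≤ k → k ≤ n - r → 0 ≤ padicValRat p (cval n r s' k)) ∧
    (∀ k : ℕ, 1 ≤ k → k ≤ n - r → k ≠ p →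
        -((Finset.univ.sup s' : ℕ) : ℤ) ≤ padicValRat p (cval n r s' k)) := by
  classical
  haveI : Fact p.Prime := ⟨hp⟩
  have h2p : n < 2 * p := by
    have : (n : ℚ) < 2 * p := by linarith
    exact_mod_cast this
  have hrn : r ≤ n := by omega
  -- characterize multiples of p in (0, n]
  have hvalNat : ∀ v : ℕ, 0 < v → v ≤ n → padicValNat p v = if v = p then 1 else 0 := by
    intro v hv0 hvn
    split_ifs with h
    · subst h; exact padicValNat.self hp.one_lt
    · refine padicValNat.eq_zero_of_not_dvd ?_
      rintro ⟨m, rfl⟩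
      have hm2 : m < 2 := by
        by_contra hm
        push_neg at hm
        have : p * 2 ≤ p * m := Nat.mul_le_mul_left _ hm
        omega
      interval_cases m
      · simp at hv0
      · omega
  -- valuation of a single term
  have hterm : ∀ k : ℕ, ∀ kk : Fin r → Fin n,
      (∀ i j : Fin r, i < j → kk i < kk j) → (∀ i, k ≤ (kk i : ℕ)) →
      padicValRat p (∏ i, (1 : ℚ) / ((kk i : ℕ) + 1 : ℚ) ^ s' i) =
        -(∑ i, (s' i : ℤ) * (if (kk i : ℕ) + 1 = p then 1 else 0)) := by
    intro k kk hmono _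
    have hne0 : ∀ i : Fin r, ((kk i : ℕ) + 1 : ℚ) ≠ 0 := by
      intro i; positivity
    rw [padicValRat_prod_aux _ _ (fun i _ => by
      have := hne0 i; positivity)]
    rw [← Finset.sum_neg_distrib]
    refine Finset.sum_congr rfl fun i _ => ?_
    rw [one_div, padicValRat.inv, padicValRat.pow ((kk i : ℕ) + 1 : ℚ)]
    have hcast : (((kk i : ℕ) + 1 : ℕ) : ℚ) = ((kk i : ℕ) + 1 : ℚ) := by push_cast; ring
    rw [← hcast, padicValRat.of_nat,
      hvalNat ((kk i : ℕ) + 1) (Nat.succ_pos _) (by have := (kk i).isLt; omega)]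
    split_ifs <;> simp
  -- injectivity and the sum bound in the case k < p
  have hsumbound : ∀ kk : Fin r → Fin n,
      (∀ i j : Fin r, i < j → kk i < kk j) →
      (∑ i, (s' i : ℤ) * (if (kk i : ℕ) + 1 = p then 1 else 0)) ≤
        ((Finset.univ.sup s' : ℕ) : ℤ) := by
    intro kk hmono
    have hinj : Function.Injective kk := by
      intro i j hij
      by_contra hne
      rcases lt_or_gt_of_ne hne with h | h
      · exact absurd (hmono i j h) (by simp [hij])
      · exact absurd (hmono j i h) (by simp [hij])
    have : (∑ i, (s' i : ℤ) * (if (kk i : ℕ) + 1 = p then 1 else 0)) =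
        ∑ i, (if (kk i : ℕ) + 1 = p then (s' i : ℤ) else 0) := by
      refine Finset.sum_congr rfl fun i _ => ?_
      split_ifs <;> simp
    rw [this]
    by_cases hex : ∃ j : Fin r, (kk j : ℕ) + 1 = p
    · obtain ⟨j, hj⟩ := hex
      have heq : ∀ i : Fin r, ((kk i : ℕ) + 1 = p) ↔ i = j := by
        intro i
        constructor
        · intro h
          exact hinj (Fin.ext (by omega))
        · rintro rfl; exact hj
      have : (∑ i, (if (kk i : ℕ) + 1 = p then (s' i : ℤ) else 0)) =
          ∑ i, (if i = j then (s' i : ℤ) else 0) := by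
        refine Finset.sum_congr rfl fun i _ => ?_
        simp [heq i]
      rw [this, Finset.sum_ite_eq' Finset.univ j, if_pos (Finset.mem_univ j)]
      exact_mod_cast Finset.le_sup (f := s') (Finset.mem_univ j)
    · push_neg at hex
      have : (∑ i, (if (kk i : ℕ) + 1 = p then (s' i : ℤ) else 0)) = 0 := by
        refine Finset.sum_eq_zero fun i _ => ?_
        rw [if_neg (hex i)]
      rw [this]
      exact Int.ofNat_nonneg _
  -- positivity of terms
  have hpos : ∀ kk : Fin r → Fin n,
      0 < ∏ i, (1 : ℚ) / ((kk i : ℕ) + 1 : ℚ) ^ s' i := by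
    intro kk
    refine Finset.prod_pos fun i _ => by positivity
  -- nonemptiness of the index set for k ≤ n - r
  have hne : ∀ k : ℕ, k ≤ n - r →
      (Finset.univ.filter (fun kk : Fin r → Fin n =>
        (∀ i j : Fin r, i < j → kk i < kk j) ∧ ∀ i, k ≤ (kk i : ℕ))).Nonempty := by
    intro k hk
    refine ⟨fun i => ⟨k + i, by have := i.isLt; omega⟩, ?_⟩
    rw [Finset.mem_filter]
    refine ⟨Finset.mem_univ _, fun i j hij => ?_, fun i => Nat.le_add_right k i⟩
    exact Fin.mk_lt_mk.mpr (Nat.add_lt_add_left hij k)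
  have main1 : ∀ k : ℕ, k ≤ n - r →
      -((Finset.univ.sup s' : ℕ) : ℤ) ≤ padicValRat p (cval n r s' k) := by
    intro k hk
    unfold cval
    refine padicValRat_sum_ge _ _ _ (hne k hk) (fun kk _ => hpos kk) fun kk hkk => ?_
    rw [Finset.mem_filter] at hkk
    rw [hterm k kk hkk.2.1 hkk.2.2]
    exact neg_le_neg (hsumbound kk hkk.2.1)
  have main2 : ∀ k : ℕ, p ≤ k → k ≤ n - r → 0 ≤ padicValRat p (cval n r s' k) := by
    intro k hpk hk
    unfold cval
    refine padicValRat_sum_ge _ _ _ (hne k hk) (fun kk _ => hpos kk) fun kk hkk => ?_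
    rw [Finset.mem_filter] at hkk
    rw [hterm k kk hkk.2.1 hkk.2.2]
    have : (∑ i, (s' i : ℤ) * (if (kk i : ℕ) + 1 = p then 1 else 0)) = 0 := by
      refine Finset.sum_eq_zero fun i _ => ?_
      have := hkk.2.2 i
      rw [if_neg (by omega)]
      ring
    rw [this]; simp
  refine ⟨fun k hk1 hk2 => main1 k (by omega), main2, fun k hk1 hk2 hk3 => ?_⟩
  rcases lt_or_ge k p with h | h
  · exact main1 k hk2
  · exact le_trans (by simp) (main2 k h hk2)
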